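/- The expected number of flips of a fair coin until HH first appears is 6 with variance 22: ∑_{n=1}^∞ n · a_HH(n) · (1/2)^n = 6, and ∑_{n=1}^∞ n² · a_HH(n) · (1/2)^n − 6² = 22 (so the standard deviation is √22); in particular both series converge. -/

import Mathlib

open List Real

theorem infix_cons_false (t : List Bool) :
    [true,true] <:+: (false :: t) ↔ [true,true] <:+: t := by
  rw [List.infix_cons_iff, List.cons_prefix_cons]
  simp

theorem infix_cons_tf (u : List Bool) :
    [true,true] <:+: (true :: false :: u) ↔ [true,true] <:+: u := by
  rw [List.infix_cons_iff, List.cons_prefix_cons, List.cons_prefix_cons]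
  simp [infix_cons_false]

theorem head_false_of_no (t : List Bool) (ht : t ≠ [])
    (h : ¬ [true,true] <:+: (true :: t)) : ∃ u, t = false :: u := by
  cases t with
  | nil => simp at ht
  | cons a u =>
    cases a
    · exact ⟨u, rfl⟩
    · exact absurd (List.IsPrefix.isInfix ⟨u, rfl⟩) h

def LL : ℕ → Finset (List Bool)
  | 0 => {[]}
  | 1 => {[false], [true]}
  | (n+2) => (LL (n+1)).image (false :: ·) ∪ (LL n).image (fun u => true :: false :: u)

theorem mem_LL : ∀ n (l : List Bool), l ∈ LL n ↔ l.length = n ∧ ¬ [true,true] <:+: l := by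
  intro n
  induction n using Nat.strong_induction_on with
  | _ n ih =>
    match n with
    | 0 =>
      intro l
      simp only [LL, Finset.mem_singleton]
      constructor
      · rintro rfl; simp
      · rintro ⟨h1, -⟩; exact List.length_eq_zero_iff.mp h1
    | 1 =>
      intro l
      simp only [LL, Finset.mem_insert, Finset.mem_singleton]
      constructor
      · rintro (rfl | rfl) <;> refine ⟨rfl, fun h => ?_⟩ <;> simpa using h.length_le
      · rintro ⟨h1, -⟩
        match l, h1 with
        | [a], _ => cases a <;> simp
    | (n+2) =>
      intro l
      simp only [LL, Finset.mem_union, Finset.mem_image]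
      constructor
      · rintro (⟨t, ht, rfl⟩ | ⟨u, hu, rfl⟩)
        · obtain ⟨h1, h2⟩ := (ih (n+1) (by omega) t).mp ht
          exact ⟨by simp [h1], by rwa [infix_cons_false]⟩
        · obtain ⟨h1, h2⟩ := (ih n (by omega) u).mp hu
          exact ⟨by simp [h1], by rwa [infix_cons_tf]⟩
      · rintro ⟨h1, h2⟩
        match l with
        | a :: t =>
          cases a
          · left
            exact ⟨t, (ih (n+1) (by omega) t).mpr ⟨by simpa using h1, by rwa [infix_cons_false] at h2⟩, rfl⟩
          · right
            obtain ⟨u, rfl⟩ := head_false_of_no t (by rintro rfl; simp at h1) h2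
            exact ⟨u, (ih n (by omega) u).mpr ⟨by simpa using h1, by rwa [infix_cons_tf] at h2⟩, rfl⟩

theorem card_LL : ∀ n, (LL n).card = Nat.fib (n+2) := by
  intro n
  induction n using Nat.strong_induction_on with
  | _ n ih =>
    match n with
    | 0 => decide
    | 1 => decide
    | (n+2) =>
      rw [LL, Finset.card_union_of_disjoint, Finset.card_image_of_injective _ (by
          intro a b h; simpa using h),
        Finset.card_image_of_injective _ (by intro a b h; simpa using h),
        ih (n+1) (by omega), ih n (by omega), Nat.fib_add_two (n := n+2)]
      · ring
      · rw [Finset.disjoint_left]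
        rintro l hl hr
        simp only [Finset.mem_image] at hl hr
        obtain ⟨t, -, rfl⟩ := hl
        obtain ⟨u, -, h⟩ := hr
        simp at h

/-- The number of binary sequences (lists of Booleans, `true` = H, `false` = T) of
length `n` in which the word `W` appears for the first time exactly at the end:
`W` is a suffix of `l` and `W` does not occur as a contiguous sublist of `l` with
its last entry removed. -/
noncomputable def firstCount (W : List Bool) (n : ℕ) : ℕ :=
  Nat.card {l : List Bool // l.length = n ∧ W <:+ l ∧ ¬ (W <:+: l.dropLast)}

theorem rev_iff (n : ℕ) (l : List Bool) :
    (l.length = n ∧ [true,true] <:+ l ∧ ¬ ([true,true] <:+: l.dropLast)) ↔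
    (l.reverse.length = n ∧ [true,true] <+: l.reverse ∧ ¬ ([true,true] <:+: l.reverse.tail)) := by
  have h2 : [true,true] <+: l.reverse ↔ [true,true] <:+ l := by
    conv_lhs => rw [show [true,true] = [true,true].reverse from rfl]
    exact List.reverse_prefix
  have h3 : [true,true] <:+: l.reverse.tail ↔ [true,true] <:+: l.dropLast := by
    rw [List.tail_reverse]
    conv_lhs => rw [show [true,true] = [true,true].reverse from rfl]
    exact List.reverse_infix
  rw [List.length_reverse, h2, h3]

theorem firstCount_eq (n : ℕ) :
    firstCount [true,true] n
      = Nat.card {l : List Bool // l.length = n ∧ [true,true] <+: l ∧ ¬ ([true,true] <:+: l.tail)} := by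
  apply Nat.card_congr
  exact
    { toFun := fun x => ⟨x.1.reverse, (rev_iff n x.1).mp x.2⟩
      invFun := fun x => ⟨x.1.reverse, (rev_iff n x.1.reverse).mpr
        (by rw [List.reverse_reverse]; exact x.2)⟩
      left_inv := fun x => Subtype.ext (by simp)
      right_inv := fun x => Subtype.ext (by simp) }

theorem firstCount_HH : ∀ n, firstCount [true,true] n = Nat.fib (n-1) := by
  intro n
  rw [firstCount_eq]
  match n with
  | 0 =>
    have : IsEmpty {l : List Bool // l.length = 0 ∧ [true,true] <+: l ∧ ¬ ([true,true] <:+: l.tail)} :=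
      ⟨fun x => by have h := x.2.2.1.length_le; have h2 := x.2.1; simp at h h2; omega⟩
    rw [Nat.card_of_isEmpty]; rfl
  | 1 =>
    have : IsEmpty {l : List Bool // l.length = 1 ∧ [true,true] <+: l ∧ ¬ ([true,true] <:+: l.tail)} :=
      ⟨fun x => by have h := x.2.2.1.length_le; have h2 := x.2.1; simp at h h2; omega⟩
    simp [Nat.card_of_isEmpty]
  | 2 =>
    rw [Nat.card_congr (Equiv.subtypeEquivRight (q := fun l : List Bool => l = [true,true])
      (fun l => by
        constructor
        · rintro ⟨h1, h2, -⟩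
          exact (List.IsPrefix.eq_of_length h2 (by simp [h1])).symm ▸ rfl
        · rintro rfl
          refine ⟨rfl, List.prefix_refl _, fun h => by simpa using h.length_le⟩))]
    haveI : Unique {l : List Bool // l = [true,true]} :=
      ⟨⟨⟨_, rfl⟩⟩, fun x => Subtype.ext x.2⟩
    simp [Nat.card_unique]
  | (m+3) =>
    rw [Nat.card_congr (Equiv.subtypeEquivRight
      (q := fun l : List Bool => l ∈ (LL m).image (fun u => true :: true :: false :: u))
      (fun l => by
        simp only [Finset.mem_image]
        constructor
        · rintro ⟨h1, ⟨t, rfl⟩, h3⟩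
          simp only [List.cons_append, List.nil_append] at h1 h3 ⊢
          obtain ⟨u, rfl⟩ := head_false_of_no t (by intro h; subst h; simp at h1) (by
            simpa using h3)
          refine ⟨u, (mem_LL m u).mpr ⟨by simp at h1; omega, ?_⟩, rfl⟩
          rw [List.tail_cons] at h3
          rwa [infix_cons_tf] at h3
        · rintro ⟨u, hu, rfl⟩
          obtain ⟨h1, h2⟩ := (mem_LL m u).mp hu
          exact ⟨by simp [h1], ⟨false :: u, rfl⟩, by
            rw [List.tail_cons]; rwa [infix_cons_tf]⟩))]
    rw [Nat.card_eq_finsetCard, Finset.card_image_of_injective _ (fun a b h => by simpa using h),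
      card_LL]
    rfl

theorem norm_gold_half : ‖goldenRatio/2‖ < 1 := by
  rw [Real.norm_eq_abs, abs_lt]
  constructor <;> nlinarith [goldenRatio_pos, goldenRatio_lt_two]

theorem norm_goldConj_half : ‖goldenConj/2‖ < 1 := by
  rw [Real.norm_eq_abs, abs_lt]
  constructor <;> nlinarith [goldenConj_neg, neg_one_lt_goldenConj]

theorem summable_n_geo {r : ℝ} (hr : ‖r‖ < 1) : Summable (fun n:ℕ => (n:ℝ) * r^n) := by
  simpa using summable_pow_mul_geometric_of_norm_lt_one 1 hr

theorem summable_n2_geo {r : ℝ} (hr : ‖r‖ < 1) : Summable (fun n:ℕ => (n:ℝ)^2 * r^n) := by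
  simpa using summable_pow_mul_geometric_of_norm_lt_one 2 hr

theorem one_sub_ne {r : ℝ} (hr : ‖r‖ < 1) : (1:ℝ) - r ≠ 0 := by
  rw [Real.norm_eq_abs, abs_lt] at hr
  intro h; linarith

theorem tsum_sq_mul_geo {r : ℝ} (hr : ‖r‖ < 1) :
    ∑' n:ℕ, (n:ℝ)^2 * r^n = r*(1+r)/(1-r)^3 := by
  have h2 := summable_n2_geo hr
  have h1 := summable_n_geo hr
  have h0 := summable_geometric_of_norm_lt_one hr
  have hne := one_sub_ne hr
  have shift : ∑' n:ℕ, ((n:ℝ)+1)^2 * r^(n+1)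
      = r * (∑' n:ℕ, (n:ℝ)^2 * r^n) + 2*r*(∑' n:ℕ, (n:ℝ) * r^n) + r*(∑' n:ℕ, r^n) := by
    have e : ∀ n:ℕ, ((n:ℝ)+1)^2 * r^(n+1)
        = r * ((n:ℝ)^2 * r^n) + 2*r*((n:ℝ)*r^n) + r*(r^n) := by
      intro n; ring
    rw [tsum_congr e, Summable.tsum_add ((h2.mul_left r).add (h1.mul_left (2*r))) (h0.mul_left r),
      Summable.tsum_add (h2.mul_left r) (h1.mul_left (2*r)), tsum_mul_left, tsum_mul_left, tsum_mul_left]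
  have key : ∑' n:ℕ, (n:ℝ)^2 * r^n
      = r * (∑' n:ℕ, (n:ℝ)^2 * r^n) + 2*r*(r/(1-r)^2) + r*(1/(1-r)) := by
    conv_lhs => rw [h2.tsum_eq_zero_add]
    push_cast
    rw [shift, tsum_coe_mul_geometric_of_norm_lt_one hr, tsum_geometric_of_norm_lt_one hr,
      inv_eq_one_div]
    ring
  have hT : ∑' n:ℕ, (n:ℝ)^2 * r^n = (2*r*(r/(1-r)^2) + r*(1/(1-r))) / (1-r) := by
    rw [eq_div_iff hne]; linear_combination key
  rw [hT]; field_simp; ring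

theorem sqrt5_facts : Real.sqrt 5 ^ 2 = 5 ∧ 2 < Real.sqrt 5 ∧ Real.sqrt 5 < 3 := by
  have hs : Real.sqrt 5 ^ 2 = 5 := Real.sq_sqrt (by norm_num)
  have hsnn := Real.sqrt_nonneg 5
  exact ⟨hs, by nlinarith, by nlinarith⟩

theorem binet_aux (a b s c : ℝ) (ha : a ≠ 0) (hb : b ≠ 0) (hs : s ≠ 0) (m : ℕ) :
    c * ((a^m - b^m)/s) * (1/2)^(m+1)
      = (1/(s*a)) * (c * (a/2)^(m+1)) - (1/(s*b)) * (c * (b/2)^(m+1)) := by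
  rw [div_pow, div_pow, div_pow, one_pow]
  field_simp
  ring

theorem pointwise1 (n : ℕ) :
    (n:ℝ) * (Nat.fib (n-1) : ℝ) * (1/2)^n
      = (1/(Real.sqrt 5 * goldenRatio)) * ((n:ℝ) * (goldenRatio/2)^n)
        - (1/(Real.sqrt 5 * goldenConj)) * ((n:ℝ) * (goldenConj/2)^n) := by
  obtain ⟨hs, h2s, h3s⟩ := sqrt5_facts
  match n with
  | 0 => simp
  | (m+1) =>
    have h5 : Real.sqrt 5 ≠ 0 := by nlinarith
    have hphi := goldenRatio_ne_zero
    have hpsi := goldenConj_ne_zero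
    rw [show m+1-1 = m from rfl, Real.coe_fib_eq]
    exact binet_aux _ _ _ _ goldenRatio_ne_zero goldenConj_ne_zero h5 m

theorem pointwise2 (n : ℕ) :
    (n:ℝ)^2 * (Nat.fib (n-1) : ℝ) * (1/2)^n
      = (1/(Real.sqrt 5 * goldenRatio)) * ((n:ℝ)^2 * (goldenRatio/2)^n)
        - (1/(Real.sqrt 5 * goldenConj)) * ((n:ℝ)^2 * (goldenConj/2)^n) := by
  obtain ⟨hs, h2s, h3s⟩ := sqrt5_facts
  match n with
  | 0 => simp
  | (m+1) =>
    have h5 : Real.sqrt 5 ≠ 0 := by nlinarith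
    have hphi := goldenRatio_ne_zero
    have hpsi := goldenConj_ne_zero
    rw [show m+1-1 = m from rfl, Real.coe_fib_eq]
    exact binet_aux _ _ _ _ goldenRatio_ne_zero goldenConj_ne_zero h5 m

theorem summable1 : Summable (fun n:ℕ => (n:ℝ) * (Nat.fib (n-1):ℝ) * (1/2)^n) :=
  (((summable_n_geo norm_gold_half).mul_left (1/(Real.sqrt 5 * goldenRatio))).sub
    ((summable_n_geo norm_goldConj_half).mul_left (1/(Real.sqrt 5 * goldenConj)))).congr
    (fun n => (pointwise1 n).symm)

theorem summable2 : Summable (fun n:ℕ => (n:ℝ)^2 * (Nat.fib (n-1):ℝ) * (1/2)^n) :=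
  (((summable_n2_geo norm_gold_half).mul_left (1/(Real.sqrt 5 * goldenRatio))).sub
    ((summable_n2_geo norm_goldConj_half).mul_left (1/(Real.sqrt 5 * goldenConj)))).congr
    (fun n => (pointwise2 n).symm)

theorem tsum1 : ∑' n:ℕ, (n:ℝ) * (Nat.fib (n-1):ℝ) * (1/2)^n
    = (1/(Real.sqrt 5 * goldenRatio)) * ((goldenRatio/2)/(1-goldenRatio/2)^2)
      - (1/(Real.sqrt 5 * goldenConj)) * ((goldenConj/2)/(1-goldenConj/2)^2) := by
  rw [tsum_congr pointwise1,
    Summable.tsum_sub ((summable_n_geo norm_gold_half).mul_left _)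
      ((summable_n_geo norm_goldConj_half).mul_left _),
    tsum_mul_left, tsum_mul_left,
    tsum_coe_mul_geometric_of_norm_lt_one norm_gold_half,
    tsum_coe_mul_geometric_of_norm_lt_one norm_goldConj_half]

theorem tsum2 : ∑' n:ℕ, (n:ℝ)^2 * (Nat.fib (n-1):ℝ) * (1/2)^n
    = (1/(Real.sqrt 5 * goldenRatio)) * ((goldenRatio/2)*(1+goldenRatio/2)/(1-goldenRatio/2)^3)
      - (1/(Real.sqrt 5 * goldenConj)) * ((goldenConj/2)*(1+goldenConj/2)/(1-goldenConj/2)^3) := by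
  rw [tsum_congr pointwise2,
    Summable.tsum_sub ((summable_n2_geo norm_gold_half).mul_left _)
      ((summable_n2_geo norm_goldConj_half).mul_left _),
    tsum_mul_left, tsum_mul_left,
    tsum_sq_mul_geo norm_gold_half, tsum_sq_mul_geo norm_goldConj_half]

theorem final1_gen (s : ℝ) (hs : s^2 = 5) (h2s : 2 < s) (h3s : s < 3) :
    (1/(s*((1+s)/2))) * (((1+s)/2/2)/(1-(1+s)/2/2)^2)
      - (1/(s*((1-s)/2))) * (((1-s)/2/2)/(1-(1-s)/2/2)^2) = 6 := by
  have h0 : s ≠ 0 := by nlinarith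
  have h3 : (1:ℝ) - (1+s)/2/2 ≠ 0 := by intro h; nlinarith
  have h4 : (1:ℝ) - (1-s)/2/2 ≠ 0 := by intro h; nlinarith
  have ha : s*((1+s)/2) ≠ 0 := by intro h; nlinarith
  have hb : s*((1-s)/2) ≠ 0 := by intro h; nlinarith
  have cx : 1/(s*((1+s)/2)) = (5-s)/10 := by
    rw [div_eq_div_iff ha (by norm_num)]
    linear_combination ((s-4)/2) * hs
  have cy : 1/(s*((1-s)/2)) = -(5+s)/10 := by
    rw [div_eq_div_iff hb (by norm_num)]
    linear_combination ((-s-4)/2) * hs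
  have gx : ((1+s)/2/2)/(1-(1+s)/2/2)^2 = 11+5*s := by
    rw [div_eq_iff (pow_ne_zero 2 h3)]
    linear_combination ((19-5*s)/16) * hs
  have gy : ((1-s)/2/2)/(1-(1-s)/2/2)^2 = 11-5*s := by
    rw [div_eq_iff (pow_ne_zero 2 h4)]
    linear_combination ((19+5*s)/16) * hs
  rw [cx, cy, gx, gy]
  linear_combination (-1 : ℝ) * hs

theorem final2_gen (s : ℝ) (hs : s^2 = 5) (h2s : 2 < s) (h3s : s < 3) :
    (1/(s*((1+s)/2))) * (((1+s)/2/2)*(1+(1+s)/2/2)/(1-(1+s)/2/2)^3)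
      - (1/(s*((1-s)/2))) * (((1-s)/2/2)*(1+(1-s)/2/2)/(1-(1-s)/2/2)^3) = 58 := by
  have h0 : s ≠ 0 := by nlinarith
  have h3 : (1:ℝ) - (1+s)/2/2 ≠ 0 := by intro h; nlinarith
  have h4 : (1:ℝ) - (1-s)/2/2 ≠ 0 := by intro h; nlinarith
  have ha : s*((1+s)/2) ≠ 0 := by intro h; nlinarith
  have hb : s*((1-s)/2) ≠ 0 := by intro h; nlinarith
  have cx : 1/(s*((1+s)/2)) = (5-s)/10 := by
    rw [div_eq_div_iff ha (by norm_num)]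
    linear_combination ((s-4)/2) * hs
  have cy : 1/(s*((1-s)/2)) = -(5+s)/10 := by
    rw [div_eq_div_iff hb (by norm_num)]
    linear_combination ((-s-4)/2) * hs
  have gx : ((1+s)/2/2)*(1+(1+s)/2/2)/(1-(1+s)/2/2)^3 = 105+47*s := by
    rw [div_eq_iff (pow_ne_zero 3 h3)]
    linear_combination ((47*s^2-318*s+563)/64) * hs
  have gy : ((1-s)/2/2)*(1+(1-s)/2/2)/(1-(1-s)/2/2)^3 = 105-47*s := by
    rw [div_eq_iff (pow_ne_zero 3 h4)]
    linear_combination ((47*s^2+318*s+563)/64) * hs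
  rw [cx, cy, gx, gy]
  linear_combination (-47/5 : ℝ) * hs

theorem final1 : (1/(Real.sqrt 5 * goldenRatio)) * ((goldenRatio/2)/(1-goldenRatio/2)^2)
    - (1/(Real.sqrt 5 * goldenConj)) * ((goldenConj/2)/(1-goldenConj/2)^2) = 6 := by
  obtain ⟨hs, h2s, h3s⟩ := sqrt5_facts
  show (1/(Real.sqrt 5 * ((1+Real.sqrt 5)/2))) * (((1+Real.sqrt 5)/2/2)/(1-(1+Real.sqrt 5)/2/2)^2)
    - (1/(Real.sqrt 5 * ((1-Real.sqrt 5)/2))) * (((1-Real.sqrt 5)/2/2)/(1-(1-Real.sqrt 5)/2/2)^2) = 6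
  exact final1_gen _ hs h2s h3s

theorem final2 : (1/(Real.sqrt 5 * goldenRatio)) * ((goldenRatio/2)*(1+goldenRatio/2)/(1-goldenRatio/2)^3)
    - (1/(Real.sqrt 5 * goldenConj)) * ((goldenConj/2)*(1+goldenConj/2)/(1-goldenConj/2)^3) = 58 := by
  obtain ⟨hs, h2s, h3s⟩ := sqrt5_facts
  show (1/(Real.sqrt 5 * ((1+Real.sqrt 5)/2))) * (((1+Real.sqrt 5)/2/2)*(1+(1+Real.sqrt 5)/2/2)/(1-(1+Real.sqrt 5)/2/2)^3)
    - (1/(Real.sqrt 5 * ((1-Real.sqrt 5)/2))) * (((1-Real.sqrt 5)/2/2)*(1+(1-Real.sqrt 5)/2/2)/(1-(1-Real.sqrt 5)/2/2)^3) = 58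
  exact final2_gen _ hs h2s h3s

theorem stmt_6 :
    Summable (fun n : ℕ => (n : ℝ) * (firstCount [true, true] n : ℝ) * (1 / 2) ^ n) ∧
    ∑' n : ℕ, (n : ℝ) * (firstCount [true, true] n : ℝ) * (1 / 2) ^ n = 6 ∧
    Summable (fun n : ℕ => (n : ℝ) ^ 2 * (firstCount [true, true] n : ℝ) * (1 / 2) ^ n) ∧
    (∑' n : ℕ, (n : ℝ) ^ 2 * (firstCount [true, true] n : ℝ) * (1 / 2) ^ n) - 6 ^ 2 = 22 := by
  have e1 : (fun n : ℕ => (n : ℝ) * (firstCount [true, true] n : ℝ) * (1 / 2) ^ n)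
      = (fun n : ℕ => (n : ℝ) * (Nat.fib (n-1) : ℝ) * (1 / 2) ^ n) := by
    funext n; rw [firstCount_HH]
  have e2 : (fun n : ℕ => (n : ℝ) ^ 2 * (firstCount [true, true] n : ℝ) * (1 / 2) ^ n)
      = (fun n : ℕ => (n : ℝ) ^ 2 * (Nat.fib (n-1) : ℝ) * (1 / 2) ^ n) := by
    funext n; rw [firstCount_HH]
  refine ⟨by rw [e1]; exact summable1, by rw [e1, tsum1, final1], by rw [e2]; exact summable2, ?_⟩
  rw [e2, tsum2, final2]
  norm_num
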